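/- Let $A_{j,\ell,v}$ denote the number of families of $\ell$ distinct $v$-element subsets of $\{1,\dots,j\}$ whose union is all of $\{1,\dots,j\}$. Then $A_{j,v} := \sum_{\ell=1}^{\binom{j}{v}} (-1)^{\ell-1} A_{j,\ell,v} = (-1)^{j-v}\binom{j-1}{v-1}$ for all integers $j,v$ with $\max\{2,v\} \le j$. -/

import Mathlib

open Finset

private lemma alt_partial_sum (n : ℕ) : ∀ m : ℕ,
    ∑ k ∈ Finset.range (m + 1), (-1 : ℤ) ^ k * ((n + 1).choose k) = (-1) ^ m * (n.choose m)
  | 0 => by simp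
  | m + 1 => by
    rw [Finset.sum_range_succ, alt_partial_sum n m, Nat.choose_succ_succ]
    push_cast
    ring

/-- `vCovers j ℓ v`: the families of `ℓ` pairwise distinct `v`-element subsets
of `{1,…,j}` (modelled as `Fin j`) whose union is all of `{1,…,j}`. -/
def vCovers (j ℓ v : ℕ) : Finset (Finset (Finset (Fin j))) :=
  Finset.univ.filter
    (fun F => F.card = ℓ ∧ (∀ S ∈ F, S.card = v) ∧ F.sup id = Finset.univ)

/-- `A j ℓ v`: the number of `v`-covers of size `ℓ` of a `j`-element set. -/
def numVCovers (j ℓ v : ℕ) : ℕ := (vCovers j ℓ v).card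

/-- `A_{j,v} = ∑_{ℓ=1}^{C(j,v)} (-1)^{ℓ-1} A_{j,ℓ,v} = (-1)^{j-v} C(j-1,v-1)`
for `max 2 v ≤ j`.  (We write `(-1)^(ℓ+1)` and `(-1)^(j+v)`, which agree with
`(-1)^(ℓ-1)` and `(-1)^(j-v)` for integers.) -/
theorem alternating_sum_numVCovers (j v : ℕ) (hv : 1 ≤ v) (hj : max 2 v ≤ j) :
    ∑ ℓ ∈ Finset.Icc 1 (j.choose v), (-1 : ℤ) ^ (ℓ + 1) * numVCovers j ℓ v =
      (-1 : ℤ) ^ (j + v) * ((j - 1).choose (v - 1)) := by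
  classical
  have hj2 : 2 ≤ j := le_trans (le_max_left _ _) hj
  have hvj : v ≤ j := le_trans (le_max_right _ _) hj
  set Sv : Finset (Finset (Fin j)) := Finset.powersetCard v Finset.univ with hSv
  set Covers : Finset (Finset (Finset (Fin j))) :=
    Sv.powerset.filter (fun F => F.sup id = Finset.univ) with hCovers
  have hmap : ∀ F ∈ Covers, F.card ∈ Finset.Icc 1 (j.choose v) := by
    intro F hF
    rw [hCovers, Finset.mem_filter, Finset.mem_powerset] at hF
    rw [Finset.mem_Icc]
    constructor
    · rcases Finset.eq_empty_or_nonempty F with rfl | hFne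
      · exfalso
        have h2 := hF.2
        rw [Finset.sup_empty] at h2
        have h3 := congrArg Finset.card h2
        simp [Finset.card_univ] at h3
        omega
      · exact Finset.card_pos.2 hFne
    · calc F.card ≤ Sv.card := Finset.card_le_card hF.1
        _ = j.choose v := by
          rw [hSv, Finset.card_powersetCard, Finset.card_univ, Fintype.card_fin]
  have step1 : ∑ ℓ ∈ Finset.Icc 1 (j.choose v), (-1 : ℤ) ^ (ℓ + 1) * numVCovers j ℓ v
      = ∑ F ∈ Covers, (-1 : ℤ) ^ (F.card + 1) := by
    rw [← Finset.sum_fiberwise_of_maps_to hmap (fun F => (-1 : ℤ) ^ (F.card + 1))]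
    refine Finset.sum_congr rfl fun ℓ _ => ?_
    have hfil : Covers.filter (fun F => F.card = ℓ) = vCovers j ℓ v := by
      ext F
      simp only [hCovers, vCovers, Finset.mem_filter, Finset.mem_powerset, Finset.mem_univ,
        true_and, hSv]
      constructor
      · rintro ⟨⟨h1, h2⟩, h3⟩
        exact ⟨h3, fun S hS => Finset.mem_powersetCard_univ.1 (h1 hS), h2⟩
      · rintro ⟨h3, h1, h2⟩
        exact ⟨⟨fun S hS => Finset.mem_powersetCard_univ.2 (h1 S hS), h2⟩, h3⟩
    rw [hfil]
    have hc : ∑ F ∈ vCovers j ℓ v, (-1 : ℤ) ^ (F.card + 1)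
        = ∑ _F ∈ vCovers j ℓ v, (-1 : ℤ) ^ (ℓ + 1) :=
      Finset.sum_congr rfl fun F hF => by rw [(Finset.mem_filter.1 hF).2.1]
    rw [hc, Finset.sum_const, nsmul_eq_mul, numVCovers, mul_comm]
  have key : ∑ F ∈ Covers, (-1 : ℤ) ^ F.card
      = (-1) ^ j * ((-1) ^ (v - 1) * ((j - 1).choose (v - 1))) := by
    calc ∑ F ∈ Covers, (-1 : ℤ) ^ F.card
        = ∑ F ∈ Sv.powerset, (if F.sup id = Finset.univ then (-1 : ℤ) ^ F.card else 0) := by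
          rw [hCovers, Finset.sum_filter]
      _ = ∑ F ∈ Sv.powerset, (-1 : ℤ) ^ F.card *
            ∑ T ∈ (F.sup id)ᶜ.powerset, (-1 : ℤ) ^ T.card := by
          refine Finset.sum_congr rfl fun F _ => ?_
          rw [Finset.sum_powerset_neg_one_pow_card]
          by_cases h : F.sup id = Finset.univ
          · rw [if_pos h, if_pos ((Finset.compl_eq_empty_iff _).2 h), mul_one]
          · rw [if_neg h, if_neg (fun hc => h ((Finset.compl_eq_empty_iff _).1 hc)), mul_zero]
      _ = ∑ F ∈ Sv.powerset, ∑ T ∈ (Finset.univ : Finset (Finset (Fin j))),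
            (if F.sup id ⊆ Tᶜ then (-1 : ℤ) ^ F.card * (-1) ^ T.card else 0) := by
          refine Finset.sum_congr rfl fun F _ => ?_
          rw [Finset.mul_sum, ← Finset.sum_filter]
          have : Finset.univ.filter (fun T : Finset (Fin j) => F.sup id ⊆ Tᶜ)
              = (F.sup id)ᶜ.powerset := by
            ext T
            simp [Finset.mem_powerset, Finset.subset_compl_comm]
          rw [this]
      _ = ∑ T ∈ (Finset.univ : Finset (Finset (Fin j))), ∑ F ∈ Sv.powerset,
            (if F.sup id ⊆ Tᶜ then (-1 : ℤ) ^ F.card * (-1) ^ T.card else 0) :=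
          Finset.sum_comm
      _ = ∑ T ∈ (Finset.univ : Finset (Finset (Fin j))),
            (-1 : ℤ) ^ T.card * (if (Tᶜ : Finset (Fin j)).card < v then 1 else 0) := by
          refine Finset.sum_congr rfl fun T _ => ?_
          have hset : Sv.powerset.filter (fun F => F.sup id ⊆ Tᶜ)
              = (Finset.powersetCard v Tᶜ).powerset := by
            ext F
            have hsup : F.sup id ⊆ Tᶜ ↔ ∀ S ∈ F, S ⊆ Tᶜ := by
              simp [← Finset.le_eq_subset, Finset.sup_le_iff]
            simp only [Finset.mem_filter, Finset.mem_powerset, hsup, hSv]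
            constructor
            · rintro ⟨h1, h2⟩ S hS
              exact Finset.mem_powersetCard.2
                ⟨h2 S hS, Finset.mem_powersetCard_univ.1 (h1 hS)⟩
            · intro h
              refine ⟨fun S hS => Finset.mem_powersetCard_univ.2
                (Finset.mem_powersetCard.1 (h hS)).2,
                fun S hS => (Finset.mem_powersetCard.1 (h hS)).1⟩
          calc ∑ F ∈ Sv.powerset,
                (if F.sup id ⊆ Tᶜ then (-1 : ℤ) ^ F.card * (-1) ^ T.card else 0)
              = (-1 : ℤ) ^ T.card *
                  ∑ F ∈ Sv.powerset.filter (fun F => F.sup id ⊆ Tᶜ), (-1 : ℤ) ^ F.card := by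
                rw [Finset.mul_sum, ← Finset.sum_filter]
                exact Finset.sum_congr rfl fun F _ => by ring
            _ = (-1 : ℤ) ^ T.card * (if (Tᶜ : Finset (Fin j)).card < v then 1 else 0) := by
                rw [hset, Finset.sum_powerset_neg_one_pow_card]
                simp only [Finset.powersetCard_eq_empty]
      _ = ∑ T ∈ (Finset.univ : Finset (Finset (Fin j))),
            (-1 : ℤ) ^ (Tᶜ : Finset (Fin j)).card * (if T.card < v then 1 else 0) := by
          exact Fintype.sum_equiv
            (Function.Involutive.toPerm _ (fun s : Finset (Fin j) => compl_compl s))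
            _ _ (fun T => by simp [Function.Involutive.toPerm]; split_ifs with h <;> simp [h])
      _ = ∑ T ∈ (Finset.univ : Finset (Finset (Fin j))),
            (-1 : ℤ) ^ (j - T.card) * (if T.card < v then 1 else 0) := by
          refine Finset.sum_congr rfl fun T _ => ?_
          rw [Finset.card_compl, Fintype.card_fin]
      _ = ∑ k ∈ Finset.range (j + 1),
            (j.choose k) • ((-1 : ℤ) ^ (j - k) * (if k < v then 1 else 0)) := by
          have h := Finset.sum_powerset_apply_card
            (f := fun k => (-1 : ℤ) ^ (j - k) * (if k < v then 1 else 0))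
            (x := (Finset.univ : Finset (Fin j)))
          rw [Finset.powerset_univ, Finset.card_univ, Fintype.card_fin] at h
          exact h
      _ = ∑ k ∈ Finset.range v, (-1 : ℤ) ^ (j - k) * (j.choose k) := by
          rw [← Finset.sum_subset (Finset.range_subset_range.2 (by omega : v ≤ j + 1))]
          · refine Finset.sum_congr rfl fun k hk => ?_
            rw [Finset.mem_range] at hk
            simp [hk, nsmul_eq_mul]
            ring
          · intro k _ hk
            rw [Finset.mem_range] at hk
            simp [hk]
      _ = (-1 : ℤ) ^ j * ∑ k ∈ Finset.range v, (-1 : ℤ) ^ k * (j.choose k) := by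
          rw [Finset.mul_sum]
          refine Finset.sum_congr rfl fun k hk => ?_
          rw [Finset.mem_range] at hk
          have hkj : k ≤ j := by omega
          have h1 : (-1 : ℤ) ^ (j - k) * (-1) ^ k = (-1) ^ j := by
            rw [← pow_add, Nat.sub_add_cancel hkj]
          have h2 : ((-1 : ℤ) ^ k) * ((-1 : ℤ) ^ k) = 1 := by
            rw [← mul_pow]; norm_num
          calc (-1 : ℤ) ^ (j - k) * (j.choose k)
              = ((-1 : ℤ) ^ (j - k) * (-1) ^ k) * ((-1) ^ k * (j.choose k)) := by
                rw [mul_assoc, ← mul_assoc ((-1 : ℤ) ^ k), h2, one_mul]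
            _ = (-1 : ℤ) ^ j * ((-1) ^ k * (j.choose k)) := by rw [h1]
      _ = (-1 : ℤ) ^ j * ((-1) ^ (v - 1) * ((j - 1).choose (v - 1))) := by
          congr 1
          have hv1 : v - 1 + 1 = v := Nat.sub_add_cancel hv
          have hj1 : j - 1 + 1 = j := Nat.sub_add_cancel (by omega)
          have h := alt_partial_sum (j - 1) (v - 1)
          rw [hj1, hv1] at h
          exact h
  have step2 : ∑ F ∈ Covers, (-1 : ℤ) ^ (F.card + 1) = -∑ F ∈ Covers, (-1 : ℤ) ^ F.card := by
    simp only [pow_succ]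
    rw [← Finset.sum_mul]
    ring
  rw [step1, step2, key, pow_add]
  have hv1 : (-1 : ℤ) ^ v = -(-1 : ℤ) ^ (v - 1) := by
    conv_lhs => rw [← Nat.sub_add_cancel hv]
    rw [pow_succ]; ring
  rw [hv1]
  ring
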